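/- arXiv:2107.07458 — 2 statements merged into one kernel-verified Lean document; each statement's English description precedes it below -/
import Mathlib

section
/- For every infinite path ρ in a finite directed graph with n vertices (every vertex having an outgoing edge), there exists a lasso play h·c^ω that is occurrence-equivalent to ρ, where the history h has length at most n³ + n² and the cycle c has length at most n². -/
/-- An infinite path (play) in the directed graph with edge relation `E`. -/
def IsPlay {V : Type*} (E : V → V → Prop) (ρ : ℕ → V) : Prop := ∀ k, E (ρ k) (ρ (k + 1))

/-- The set of vertices occurring infinitely often. -/
def InfVisit {V : Type*} (ρ : ℕ → V) : Set V := {v | ∀ N, ∃ k, N ≤ k ∧ ρ k = v}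

/-- The prefix (history) of `ρ` of length `m+1`, as a list. -/
def prefixList {V : Type*} (ρ : ℕ → V) (m : ℕ) : List V := (List.range (m + 1)).map ρ

/-- Occurrence-equivalence of histories: same first vertex, same last vertex,
same set of occurring vertices. -/
def HistEquiv {V : Type*} (h h' : List V) : Prop :=
  h.head? = h'.head? ∧ h.getLast? = h'.getLast? ∧ {v | v ∈ h} = {v | v ∈ h'}

/-- Occurrence-equivalence of plays. -/
def PlayEquiv {V : Type*} (ρ ρ' : ℕ → V) : Prop :=
  InfVisit ρ = InfVisit ρ' ∧
  (∀ m, ∃ m', HistEquiv (prefixList ρ m) (prefixList ρ' m')) ∧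
  (∀ m', ∃ m, HistEquiv (prefixList ρ' m') (prefixList ρ m))

/-- The lasso play `h · c^ω` (with default vertex `d`). -/
def lassoPlay {V : Type*} (d : V) (h c : List V) (k : ℕ) : V :=
  if k < h.length then h.getD k d else c.getD ((k - h.length) % c.length) d

open List

section Aux
variable {V : Type*} [DecidableEq V] {E : V → V → Prop}

lemma gl_cons {x : V} {xs : List V} (h : xs ≠ []) : (x :: xs).getLast? = xs.getLast? := by
  obtain ⟨a, ha⟩ := Option.isSome_iff_exists.1 (getLast?_isSome.2 h)
  rw [show x :: xs = [x] ++ xs from rfl, getLast?_append, ha]; rfl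

lemma loopErase : ∀ l : List V, Chain' E l →
    ∃ r : List V, Chain' E r ∧ r.head? = l.head? ∧ r.getLast? = l.getLast? ∧
      (∀ v ∈ r, v ∈ l) ∧ r.Nodup := by
  intro l
  induction l with
  | nil => exact fun _ => ⟨[], by simp [Chain']⟩
  | cons x xs ih =>
    intro hl
    obtain ⟨r, hc, hh, hla, hmem, hnd⟩ := ih hl.tail
    by_cases hx : x ∈ r
    · obtain ⟨r1, r2, rfl⟩ := append_of_mem hx
      have hsuf : (x :: r2) <:+ (r1 ++ x :: r2) := ⟨r1, rfl⟩
      have hrne : xs ≠ [] := by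
        rintro rfl
        exact absurd (hmem x hx) not_mem_nil
      refine ⟨x :: r2, hc.suffix hsuf, rfl, ?_, ?_, hnd.sublist hsuf.sublist⟩
      · rw [gl_cons hrne, ← hla, getLast?_append]
        obtain ⟨a, ha⟩ := Option.isSome_iff_exists.1 (getLast?_isSome.2 (cons_ne_nil x r2))
        rw [ha]; rfl
      · intro v hv
        rcases mem_cons.1 hv with h | h
        · exact h ▸ mem_cons_self
        · exact mem_cons_of_mem x (hmem v (by simp [h]))
    · have hch : Chain' E (x :: r) := by
        rw [Chain', isChain_cons]
        refine ⟨fun y hy => ?_, hc⟩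
        rw [hh] at hy
        exact (isChain_cons.1 hl).1 y hy
      rcases eq_or_ne xs [] with rfl | hne
      · have : r = [] := head?_eq_none_iff.1 (by simpa using hh)
        subst this
        exact ⟨[x], hch, rfl, rfl, by simp, nodup_singleton x⟩
      · have hrne : r ≠ [] := by
          intro h; subst h; exact hne (head?_eq_none_iff.1 (by simpa using hh.symm))
        refine ⟨x :: r, hch, rfl, ?_, ?_, nodup_cons.2 ⟨hx, hnd⟩⟩
        · rw [gl_cons hrne, gl_cons hne, hla]
        · intro v hv
          rcases mem_cons.1 hv with h | h
          · exact h ▸ mem_cons_self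
          · exact mem_cons_of_mem x (hmem v h)

lemma splitLast : ∀ l : List V, l ≠ [] →
    ∃ (A : List V) (v : V) (C : List V), l = A ++ v :: C ∧ v ∉ A ∧ ∀ x ∈ C, x ∈ A ∨ x = v := by
  intro l
  induction l using List.reverseRecOn with
  | nil => exact fun h => absurd rfl h
  | append_singleton l a ih =>
    intro _
    rcases eq_or_ne l [] with rfl | hne
    · exact ⟨[], a, [], by simp, by simp, by simp⟩
    obtain ⟨A, v, C, rfl, hvA, hC⟩ := ih hne
    by_cases ha : a ∈ A ∨ a = v
    · exact ⟨A, v, C ++ [a], by simp, hvA, fun x hx => by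
        rcases mem_append.1 hx with h | h
        · exact hC x h
        · simp at h; exact h ▸ ha⟩
    · push_neg at ha
      refine ⟨A ++ v :: C, a, [], rfl, ?_, by simp⟩
      intro hmem
      rcases mem_append.1 hmem with h | h
      · exact ha.1 h
      · rcases mem_cons.1 h with h | h
        · exact ha.2 h
        · rcases hC a h with h' | h'
          · exact ha.1 h'
          · exact ha.2 h'

lemma head?_append_left {s t : List V} (h : s ≠ []) : (s ++ t).head? = s.head? := by
  cases s with
  | nil => exact absurd rfl h
  | cons a s => rfl

lemma getLast?_append_right {s t : List V} (h : t ≠ []) : (s ++ t).getLast? = t.getLast? := by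
  obtain ⟨a, ha⟩ := Option.isSome_iff_exists.1 (getLast?_isSome.2 h)
  rw [getLast?_append, ha]; rfl

lemma compressAux : ∀ (n : ℕ) (l : List V), l.length ≤ n → Chain' E l → l ≠ [] →
    ∃ r : List V, Chain' E r ∧ r.head? = l.head? ∧ r.getLast? = l.getLast? ∧
      r.toFinset = l.toFinset ∧ r.length ≤ l.toFinset.card ^ 2 := by
  intro n
  induction n with
  | zero =>
    intro l hl _ hne
    exact absurd (length_eq_zero_iff.1 (Nat.le_zero.1 hl)) hne
  | succ n ih =>
    intro l hlen hl hne
    obtain ⟨A, v, C, rfl, hvA, hC⟩ := splitLast l hne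
    obtain ⟨D, hcD, hhD, hlD, hmD, hndD⟩ := loopErase (E := E) (v :: C) (hl.suffix ⟨A, rfl⟩)
    have hhD' : D.head? = some v := hhD
    have hvD : v ∈ D := mem_of_mem_head? (hhD' ▸ rfl)
    have hDne : D ≠ [] := ne_nil_of_mem hvD
    have hTl : (A ++ v :: C).toFinset = insert v A.toFinset := by
      ext x
      simp only [toFinset_append, Finset.mem_union, mem_toFinset, toFinset_cons,
        Finset.mem_insert]
      constructor
      · rintro (h | h | h)
        · exact Or.inr h
        · exact Or.inl h
        · rcases hC x h with h' | h'
          · exact Or.inr h'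
          · exact Or.inl h'
      · rintro (h | h)
        · exact Or.inr (Or.inl h)
        · exact Or.inl h
    have hDsub : D.toFinset ⊆ insert v A.toFinset := by
      intro x hx
      rcases mem_cons.1 (hmD x (mem_toFinset.1 hx)) with h | h
      · exact Finset.mem_insert.2 (Or.inl h)
      · rcases hC x h with h' | h'
        · exact Finset.mem_insert.2 (Or.inr (mem_toFinset.2 h'))
        · exact Finset.mem_insert.2 (Or.inl h')
    have hDlen : D.length ≤ (insert v A.toFinset).card := by
      rw [← toFinset_card_of_nodup hndD]
      exact Finset.card_le_card hDsub
    rcases eq_or_ne A [] with rfl | hAne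
    · refine ⟨D, hcD, hhD, hlD, ?_, ?_⟩
      · rw [hTl]
        apply Finset.Subset.antisymm (by simpa using hDsub)
        simp only [toFinset_nil, insert_empty_eq]
        exact Finset.singleton_subset_iff.2 (mem_toFinset.2 hvD)
      · rw [hTl]
        simpa using hDlen.trans (by simp)
    · have hcA : Chain' E A := (isChain_append.1 hl).1
      have hjun : ∀ x ∈ A.getLast?, ∀ y ∈ (v :: C).head?, E x y := (isChain_append.1 hl).2.2
      have hAlen : A.length ≤ n := by
        have := (length_append (as := A) (bs := v :: C)) ▸ hlen
        simp at this; omega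
      obtain ⟨A', hcA', hhA', hlA', hfA', hlenA'⟩ := ih A hAlen hcA hAne
      have hA'ne : A' ≠ [] := by
        intro h
        rw [h] at hhA'
        exact hAne (head?_eq_none_iff.1 hhA'.symm)
      refine ⟨A' ++ D, ?_, ?_, ?_, ?_, ?_⟩
      · refine isChain_append.2 ⟨hcA', hcD, fun x hx y hy => ?_⟩
        rw [hhD'] at hy
        rw [hlA'] at hx
        exact Option.mem_some_iff.1 hy ▸ hjun x hx v rfl
      · rw [head?_append_left hA'ne, hhA', head?_append_left hAne]
      · rw [getLast?_append_right hDne, hlD, getLast?_append_right (cons_ne_nil v C)]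
      · rw [toFinset_append, hfA', hTl]
        apply Finset.Subset.antisymm
        · exact Finset.union_subset (Finset.subset_insert v _) hDsub
        · exact Finset.insert_subset (Finset.mem_union_right _ (mem_toFinset.2 hvD))
            Finset.subset_union_left
      · rw [length_append, hTl]
        have hcard : (insert v A.toFinset).card = A.toFinset.card + 1 :=
          Finset.card_insert_of_notMem (by simpa using hvA)
        have h1 : A'.length ≤ A.toFinset.card ^ 2 := hlenA'
        have h2 : D.length ≤ A.toFinset.card + 1 := hcard ▸ hDlen
        nlinarith [h1, h2]

lemma compress (l : List V) (hl : Chain' E l) (hne : l ≠ []) :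
    ∃ r : List V, Chain' E r ∧ r.head? = l.head? ∧ r.getLast? = l.getLast? ∧
      r.toFinset = l.toFinset ∧ r.length ≤ l.toFinset.card ^ 2 :=
  compressAux l.length l le_rfl hl hne


lemma take_ne_nil' {l : List V} {k : ℕ} (h0 : 0 < k) (hne : l ≠ []) : l.take k ≠ [] := by
  rw [← length_pos_iff, length_take]
  exact lt_min h0 (length_pos_iff.2 hne)

lemma exists_getLast?_mem {l : List V} (hne : l ≠ []) : ∃ u, l.getLast? = some u ∧ u ∈ l :=
  ⟨l.getLast hne, getLast?_eq_getLast hne, getLast_mem hne⟩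

lemma constList {l : List V} {v : V} (hne : l ≠ []) (h : ∀ x ∈ l, x = v) :
    l.toFinset = {v} ∧ l.getLast? = some v := by
  constructor
  · apply Finset.Subset.antisymm
    · intro x hx
      simp [h x (mem_toFinset.1 hx)]
    · intro x hx
      rw [Finset.mem_singleton] at hx
      subst hx
      cases l with
      | nil => exact absurd rfl hne
      | cons a t => simp [h a (mem_cons_self)]
  · obtain ⟨u, hu, humem⟩ := exists_getLast?_mem hne
    rw [hu, h u humem]

lemma prefHelper (X S : List V) (v u : V) (hh : S.head? = some v)
    (hS : ∀ x ∈ S, x ∈ X ∨ x = v) (hu : u ∈ S) :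
    ∃ k, 0 < k ∧ k ≤ (X ++ S).length ∧
      ((X ++ S).take k).toFinset = insert v X.toFinset ∧
      ((X ++ S).take k).getLast? = some u := by
  obtain ⟨S₁, S₂, hsplit⟩ := append_of_mem hu
  have htake : (X ++ S).take (X.length + (S₁.length + 1)) = X ++ (S₁ ++ [u]) := by
    rw [hsplit, take_length_add_append]
    congr 1
    have : S₁.length + 1 = S₁.length + 1 := rfl
    rw [take_length_add_append 1]
    simp
  have hvmem : v ∈ S₁ ++ [u] := by
    rcases eq_or_ne S₁ [] with rfl | hS₁ne
    · have : u = v := by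
        rw [hsplit] at hh
        have := hh.symm
        simpa using this.symm
      simp [this]
    · have : S₁.head? = some v := by
        rw [hsplit, head?_append_left hS₁ne] at hh
        exact hh
      exact mem_append_left _ (mem_of_mem_head? (this ▸ rfl))
  refine ⟨X.length + (S₁.length + 1), by omega, by rw [hsplit]; simp, ?_, ?_⟩
  · rw [htake]
    apply Finset.Subset.antisymm
    · intro x hx
      simp only [toFinset_append, Finset.mem_union, mem_toFinset] at hx
      rcases hx with h | h
      · exact Finset.mem_insert.2 (Or.inr (mem_toFinset.2 h))
      · have hxS : x ∈ S := by
          rw [hsplit]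
          rcases h with h' | h'
          · exact mem_append_left _ h'
          · simp at h'
            subst h'
            exact mem_append_right _ (mem_cons_self)
        rcases hS x hxS with h' | h'
        · exact Finset.mem_insert.2 (Or.inr (mem_toFinset.2 h'))
        · exact Finset.mem_insert.2 (Or.inl h')
    · intro x hx
      rcases Finset.mem_insert.1 hx with h | h
      · subst h
        simp only [toFinset_append, Finset.mem_union, mem_toFinset]
        exact Or.inr (by simpa using hvmem)
      · simp only [toFinset_append, Finset.mem_union]
        exact Or.inl h
  · rw [htake, show X ++ (S₁ ++ [u]) = (X ++ S₁) ++ [u] by simp, getLast?_concat]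

lemma compress3Aux : ∀ (n : ℕ) (l : List V), l.length ≤ n → Chain' E l → l ≠ [] →
    ∃ r : List V, Chain' E r ∧ r.head? = l.head? ∧ r.getLast? = l.getLast? ∧
      r.toFinset = l.toFinset ∧ r.length ≤ l.toFinset.card ^ 3 ∧
      (∀ k, 0 < k → k ≤ r.length → ∃ j, 0 < j ∧ j ≤ l.length ∧
        (l.take j).toFinset = (r.take k).toFinset ∧
        (l.take j).getLast? = (r.take k).getLast?) ∧
      (∀ j, 0 < j → j ≤ l.length → ∃ k, 0 < k ∧ k ≤ r.length ∧
        (l.take j).toFinset = (r.take k).toFinset ∧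
        (l.take j).getLast? = (r.take k).getLast?) := by
  intro n
  induction n with
  | zero =>
    intro l hl _ hne
    exact absurd (length_eq_zero_iff.1 (Nat.le_zero.1 hl)) hne
  | succ n ih =>
    intro l hlen hl hne
    obtain ⟨A, v, C, rfl, hvA, hC⟩ := splitLast l hne
    obtain ⟨D, hcD, hhD, hlD, hfD, hlenD⟩ := compress (v :: C) (hl.suffix ⟨A, rfl⟩) (cons_ne_nil v C)
    have hhD' : D.head? = some v := hhD
    have hvD : v ∈ D := mem_of_mem_head? (hhD' ▸ rfl)
    have hDne : D ≠ [] := ne_nil_of_mem hvD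
    have hDmem : ∀ x ∈ D, x = v ∨ x ∈ C := by
      intro x hx
      have : x ∈ (v :: C).toFinset := hfD ▸ mem_toFinset.2 hx
      simpa using mem_toFinset.1 this
    have hTl : (A ++ v :: C).toFinset = insert v A.toFinset := by
      ext x
      simp only [toFinset_append, Finset.mem_union, mem_toFinset, toFinset_cons,
        Finset.mem_insert]
      constructor
      · rintro (h | h | h)
        · exact Or.inr h
        · exact Or.inl h
        · rcases hC x h with h' | h'
          · exact Or.inr h'
          · exact Or.inl h'
      · rintro (h | h)
        · exact Or.inr (Or.inl h)
        · exact Or.inl h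
    have hDsub : ∀ x ∈ D, x ∈ A ∨ x = v := by
      intro x hx
      rcases hDmem x hx with h | h
      · exact Or.inr h
      · rcases hC x h with h' | h'
        · exact Or.inl h'
        · exact Or.inr h'
    rcases eq_or_ne A [] with rfl | hAne
    · -- l = v :: C with all elements equal to v
      have hallC : ∀ x ∈ v :: C, x = v := by
        intro x hx
        rcases mem_cons.1 hx with h | h
        · exact h
        · rcases hC x h with h' | h'
          · exact absurd h' not_mem_nil
          · exact h'
      have hallD : ∀ x ∈ D, x = v := by
        intro x hx
        rcases hDsub x hx with h | h
        · exact absurd h not_mem_nil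
        · exact h
      have hone : ((v :: C) : List V).toFinset = {v} := (constList (cons_ne_nil v C) hallC).1
      refine ⟨D, hcD, hhD, hlD, ?_, ?_, ?_, ?_⟩
      · rw [nil_append, hone]
        exact (constList hDne hallD).1
      · rw [nil_append, hone]
        have hlD1 : D.length ≤ 1 := by
          have h' := hlenD
          rw [hone] at h'
          simpa using h'
        simpa using hlD1
      · intro k hk0 hkle
        refine ⟨1, one_pos, by simp, ?_⟩
        have h1 := constList (l := (v :: C).take 1) (by simp) (by
          intro x hx
          exact hallC x (mem_of_mem_take hx))
        have h2 := constList (l := D.take k) (take_ne_nil' hk0 hDne) (by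
          intro x hx
          exact hallD x (mem_of_mem_take hx))
        rw [show (([] : List V) ++ v :: C) = v :: C from rfl]
        rw [h1.1, h2.1, h1.2, h2.2]
        exact ⟨rfl, rfl⟩
      · intro j hj0 hjle
        refine ⟨1, one_pos, length_pos_iff.2 hDne, ?_⟩
        have h1 := constList (l := (v :: C).take j) (take_ne_nil' hj0 (cons_ne_nil v C)) (by
          intro x hx
          exact hallC x (mem_of_mem_take hx))
        have h2 := constList (l := D.take 1) (take_ne_nil' one_pos hDne) (by
          intro x hx
          exact hallD x (mem_of_mem_take hx))
        rw [show (([] : List V) ++ v :: C) = v :: C from rfl]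
        rw [h1.1, h2.1, h1.2, h2.2]
        exact ⟨rfl, rfl⟩
    · have hcA : Chain' E A := (isChain_append.1 hl).1
      have hjun : ∀ x ∈ A.getLast?, ∀ y ∈ (v :: C).head?, E x y := (isChain_append.1 hl).2.2
      have hAlen : A.length ≤ n := by
        have := hlen
        simp [length_append] at this
        omega
      obtain ⟨A', hcA', hhA', hlA', hfA', hlenA', hd, he⟩ := ih A hAlen hcA hAne
      have hA'ne : A' ≠ [] := by
        intro h
        rw [h] at hhA'
        exact hAne (head?_eq_none_iff.1 hhA'.symm)
      have hmemA' : ∀ x, x ∈ A' ↔ x ∈ A := by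
        intro x
        rw [← mem_toFinset, hfA', mem_toFinset]
      refine ⟨A' ++ D, ?_, ?_, ?_, ?_, ?_, ?_, ?_⟩
      · refine isChain_append.2 ⟨hcA', hcD, fun x hx y hy => ?_⟩
        rw [hhD'] at hy
        rw [hlA'] at hx
        exact Option.mem_some_iff.1 hy ▸ hjun x hx v rfl
      · rw [head?_append_left hA'ne, hhA', head?_append_left hAne]
      · rw [getLast?_append_right hDne, hlD, getLast?_append_right (cons_ne_nil v C)]
      · rw [toFinset_append, hfA', hTl]
        apply Finset.Subset.antisymm
        · refine Finset.union_subset (Finset.subset_insert v _) ?_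
          intro x hx
          rcases hDsub x (mem_toFinset.1 hx) with h | h
          · exact Finset.mem_insert.2 (Or.inr (mem_toFinset.2 h))
          · exact Finset.mem_insert.2 (Or.inl h)
        · exact Finset.insert_subset (Finset.mem_union_right _ (mem_toFinset.2 hvD))
            Finset.subset_union_left
      · -- length bound
        rw [length_append, hTl]
        have hcard : (insert v A.toFinset).card = A.toFinset.card + 1 :=
          Finset.card_insert_of_notMem (by simpa using hvA)
        have h2 : D.length ≤ (A.toFinset.card + 1) ^ 2 := by
          refine hlenD.trans ?_
          refine Nat.pow_le_pow_left ?_ 2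
          rw [← hcard]
          apply Finset.card_le_card
          intro x hx
          rcases mem_cons.1 (mem_toFinset.1 hx) with h | h
          · exact Finset.mem_insert.2 (Or.inl h)
          · rcases hC x h with h' | h'
            · exact Finset.mem_insert.2 (Or.inr (mem_toFinset.2 h'))
            · exact Finset.mem_insert.2 (Or.inl h')
        rw [hcard]
        nlinarith [hlenA', h2]
      · -- direction d : prefixes of r → prefixes of l
        intro k hk0 hkle
        rcases le_or_gt k A'.length with hkA | hkA
        · obtain ⟨j, hj0, hjle, hjf, hjl⟩ := hd k hk0 hkA
          refine ⟨j, hj0, by simp [length_append]; omega, ?_, ?_⟩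
          · rw [take_append_of_le_length hjle, take_append_of_le_length hkA]
            exact hjf
          · rw [take_append_of_le_length hjle, take_append_of_le_length hkA]
            exact hjl
        · set t := k - A'.length with ht
          have htk : k = A'.length + t := by omega
          have ht0 : 0 < t := by omega
          have htle : t ≤ D.length := by
            rw [length_append] at hkle
            omega
          have htake : (A' ++ D).take k = A' ++ D.take t := by
            rw [htk, take_length_add_append]
          have htne : D.take t ≠ [] := take_ne_nil' ht0 hDne
          obtain ⟨u, hu, humem⟩ := exists_getLast?_mem htne
          have humemD : u ∈ D := mem_of_mem_take humem
          have humemvC : u ∈ v :: C := by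
            have : u ∈ (v :: C).toFinset := hfD ▸ mem_toFinset.2 humemD
            exact mem_toFinset.1 this
          obtain ⟨j, hj0, hjle, hjf, hjl⟩ := prefHelper A (v :: C) v u rfl (fun x hx => by
            rcases mem_cons.1 hx with h | h
            · exact Or.inr h
            · exact hC x h) humemvC
          refine ⟨j, hj0, hjle, ?_, ?_⟩
          · rw [hjf, htake]
            apply Finset.Subset.antisymm
            · intro x hx
              rcases Finset.mem_insert.1 hx with h | h
              · have hht : (D.take t).head? = some v := by
                  rw [head?_take, if_neg (by omega)]
                  exact hhD'
                rw [toFinset_append, Finset.mem_union, h]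
                exact Or.inr (mem_toFinset.2 (mem_of_mem_head? (hht ▸ rfl)))
              · simp only [toFinset_append, Finset.mem_union, mem_toFinset]
                exact Or.inl ((hmemA' x).2 (mem_toFinset.1 h))
            · intro x hx
              simp only [toFinset_append, Finset.mem_union, mem_toFinset] at hx
              rcases hx with h | h
              · exact Finset.mem_insert.2 (Or.inr (mem_toFinset.2 ((hmemA' x).1 h)))
              · rcases hDsub x (mem_of_mem_take h) with h' | h'
                · exact Finset.mem_insert.2 (Or.inr (mem_toFinset.2 h'))
                · exact Finset.mem_insert.2 (Or.inl h')
          · rw [hjl, htake, getLast?_append_right htne, hu]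
      · -- direction e : prefixes of l → prefixes of r
        intro j hj0 hjle
        rcases le_or_gt j A.length with hjA | hjA
        · obtain ⟨k, hk0, hkle, hkf, hkl⟩ := he j hj0 hjA
          refine ⟨k, hk0, by simp [length_append]; omega, ?_, ?_⟩
          · rw [take_append_of_le_length hjA, take_append_of_le_length (hkle.trans (le_refl _))]
            exact hkf
          · rw [take_append_of_le_length hjA, take_append_of_le_length hkle]
            exact hkl
        · set t := j - A.length with ht
          have htj : j = A.length + t := by omega
          have ht0 : 0 < t := by omega
          have htake : (A ++ v :: C).take j = A ++ (v :: C).take t := by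
            rw [htj, take_length_add_append]
          have htne : (v :: C).take t ≠ [] := take_ne_nil' ht0 (cons_ne_nil v C)
          obtain ⟨u, hu, humem⟩ := exists_getLast?_mem htne
          have humemvC : u ∈ v :: C := mem_of_mem_take humem
          have humemD : u ∈ D := by
            have : u ∈ D.toFinset := hfD ▸ mem_toFinset.2 humemvC
            exact mem_toFinset.1 this
          obtain ⟨k, hk0, hkle, hkf, hkl⟩ := prefHelper A' D v u hhD'
            (fun x hx => by
              rcases hDsub x hx with h | h
              · exact Or.inl ((hmemA' x).2 h)
              · exact Or.inr h) humemD
          have hset : (A ++ (v :: C).take t).toFinset = insert v A.toFinset := by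
            apply Finset.Subset.antisymm
            · intro x hx
              rw [toFinset_append, Finset.mem_union] at hx
              rcases hx with h | h
              · exact Finset.mem_insert.2 (Or.inr h)
              · rcases mem_cons.1 (mem_of_mem_take (mem_toFinset.1 h)) with h' | h'
                · exact Finset.mem_insert.2 (Or.inl h')
                · rcases hC x h' with h'' | h''
                  · exact Finset.mem_insert.2 (Or.inr (mem_toFinset.2 h''))
                  · exact Finset.mem_insert.2 (Or.inl h'')
            · intro x hx
              rcases Finset.mem_insert.1 hx with h | h
              · have hht : ((v :: C).take t).head? = some v := by
                  rw [head?_take, if_neg (by omega)]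
                  rfl
                rw [toFinset_append, Finset.mem_union, h]
                exact Or.inr (mem_toFinset.2 (mem_of_mem_head? (hht ▸ rfl)))
              · rw [toFinset_append, Finset.mem_union]
                exact Or.inl h
          refine ⟨k, hk0, hkle, ?_, ?_⟩
          · rw [htake, hkf, hfA', hset]
          · rw [hkl, htake, getLast?_append_right htne, hu]

lemma prefixList_length (f : ℕ → V) (m : ℕ) : (prefixList f m).length = m + 1 := by
  simp [prefixList]

lemma prefixList_getElem (f : ℕ → V) (m i : ℕ) (h : i < (prefixList f m).length) :
    (prefixList f m)[i] = f i := by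
  simp [prefixList]

lemma prefixList_ne_nil (f : ℕ → V) (m : ℕ) : prefixList f m ≠ [] := by
  apply List.ne_nil_of_length_pos
  simp [prefixList]

lemma prefixList_head? (f : ℕ → V) (m : ℕ) : (prefixList f m).head? = some (f 0) := by
  rw [head?_eq_head (prefixList_ne_nil f m), List.head_eq_getElem, prefixList_getElem]

lemma prefixList_getLast? (f : ℕ → V) (m : ℕ) : (prefixList f m).getLast? = some (f m) := by
  rw [getLast?_eq_getLast (prefixList_ne_nil f m), List.getLast_eq_getElem]
  simp [prefixList]

lemma mem_prefixList {f : ℕ → V} {m : ℕ} {v : V} :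
    v ∈ prefixList f m ↔ ∃ i, i ≤ m ∧ f i = v := by
  simp [prefixList, Nat.lt_succ_iff]

lemma prefixList_take (f : ℕ → V) {j m : ℕ} (h : j ≤ m) :
    (prefixList f m).take (j + 1) = prefixList f j := by
  unfold prefixList
  rw [← map_take, take_range]
  congr 2
  omega

lemma prefixList_chain' {f : ℕ → V} {m : ℕ} (hf : ∀ i, E (f i) (f (i + 1))) :
    Chain' E (prefixList f m) := by
  rw [Chain', isChain_iff_getElem]
  intro i hi
  simp only [List.get_eq_getElem, prefixList_getElem]
  exact hf i

lemma setOf_mem_eq {l l' : List V} (h : l.toFinset = l'.toFinset) :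
    {v | v ∈ l} = {v | v ∈ l'} := by
  ext v
  constructor <;> intro hv
  · exact mem_toFinset.1 (h ▸ mem_toFinset.2 hv)
  · exact mem_toFinset.1 (h.symm ▸ mem_toFinset.2 hv)

end Aux

theorem stmt_0 {V : Type*} [Fintype V] (E : V → V → Prop) (hE : ∀ v, ∃ w, E v w)
    (ρ : ℕ → V) (hρ : IsPlay E ρ) :
    ∃ h c : List V, c ≠ [] ∧
      h.length ≤ (Fintype.card V) ^ 3 + (Fintype.card V) ^ 2 ∧
      c.length ≤ (Fintype.card V) ^ 2 ∧
      IsPlay E (lassoPlay (ρ 0) h c) ∧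
      PlayEquiv (lassoPlay (ρ 0) h c) ρ := by
  classical
  set n := Fintype.card V with hn
  -- prefix occurrence sets
  set S : ℕ → Finset V := fun m => (prefixList ρ m).toFinset with hSdef
  have hSmem : ∀ {m v}, v ∈ S m ↔ ∃ i, i ≤ m ∧ ρ i = v := by
    intro m v
    rw [hSdef]
    simp only [mem_toFinset]
    exact mem_prefixList
  have hSmono : ∀ {a b : ℕ}, a ≤ b → S a ⊆ S b := by
    intro a b hab x hx
    obtain ⟨i, hi, hx⟩ := hSmem.1 hx
    exact hSmem.2 ⟨i, hi.trans hab, hx⟩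
  -- maximal occurrence set
  obtain ⟨T, hTmem, hTmax⟩ := Set.Finite.exists_maximalFor id (Set.range S)
    (Set.toFinite _) ⟨S 0, Set.mem_range_self 0⟩
  obtain ⟨M1, hM1⟩ := hTmem
  subst hM1
  have hSM1 : ∀ m, S m ⊆ S M1 := by
    intro m
    rcases le_total m M1 with h | h
    · exact hSmono h
    · have h2 : S M1 ⊆ S m := hSmono h
      have h3 := hTmax ⟨m, rfl⟩ h2
      exact h3
  -- tail bound
  have hN0 : ∃ N0, ∀ k, N0 ≤ k → ρ k ∈ InfVisit ρ := by
    have key : ∀ v : V, ∃ N, v ∈ InfVisit ρ ∨ ∀ k, N ≤ k → ρ k ≠ v := by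
      intro v
      by_cases hv : v ∈ InfVisit ρ
      · exact ⟨0, Or.inl hv⟩
      · have : ¬ (∀ N, ∃ k, N ≤ k ∧ ρ k = v) := hv
        push_neg at this
        obtain ⟨N, hN⟩ := this
        exact ⟨N, Or.inr fun k hk => hN k hk⟩
    choose N hNspec using key
    refine ⟨Finset.univ.sup N, fun k hk => ?_⟩
    rcases hNspec (ρ k) with h | h
    · exact h
    · exact absurd rfl (h k ((Finset.le_sup (Finset.mem_univ (ρ k))).trans hk))
  obtain ⟨N0, hN0⟩ := hN0
  set M := max N0 M1 with hM
  have htail : ∀ k, M ≤ k → ρ k ∈ InfVisit ρ := fun k hk =>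
    hN0 k ((le_max_left _ _).trans hk)
  have hSM : ∀ m, M ≤ m → S m = S M1 := fun m hm =>
    Finset.Subset.antisymm (hSM1 m) (hSmono ((le_max_right _ _).trans hm))
  have hInfS : ∀ v ∈ InfVisit ρ, v ∈ S M1 := by
    intro v hv
    obtain ⟨k, _, hk2⟩ := hv 0
    exact hSM1 k (hSmem.2 ⟨k, le_rfl, hk2⟩)
  -- covering witnesses
  have hcov : ∀ v : V, ∃ k, M + 1 ≤ k ∧ (v ∈ InfVisit ρ → ρ k = v) := by
    intro v
    by_cases hv : v ∈ InfVisit ρ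
    · obtain ⟨k, hk1, hk2⟩ := hv (M + 1)
      exact ⟨k, hk1, fun _ => hk2⟩
    · exact ⟨M + 1, le_rfl, fun h => absurd h hv⟩
  choose kf hkf1 hkf2 using hcov
  set K := Finset.univ.sup kf with hK
  obtain ⟨M', hM'1, hM'2⟩ := htail M le_rfl (max K M + 1)
  have hMM' : M < M' := by omega
  have hKM' : K ≤ M' := by omega
  -- the cycle segment
  set σ : List V := prefixList (fun i => ρ (M + i)) (M' - M) with hσdef
  have hσchain : Chain' E σ := prefixList_chain' (fun i => by
    have := hρ (M + i)
    simpa [Nat.add_assoc] using this)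
  have hσmemInf : ∀ x ∈ σ, x ∈ InfVisit ρ := by
    intro x hx
    obtain ⟨i, _, hx⟩ := mem_prefixList.1 hx
    exact hx ▸ htail (M + i) (Nat.le_add_right M i)
  have hσcov : ∀ v ∈ InfVisit ρ, v ∈ σ := by
    intro v hv
    refine mem_prefixList.2 ⟨kf v - M, by have := hkf1 v; have := Finset.le_sup (f := kf) (Finset.mem_univ v); omega, ?_⟩
    rw [show M + (kf v - M) = kf v by have := hkf1 v; omega]
    exact hkf2 v hv
  obtain ⟨c', hc'chain, hc'h, hc'l, hc'f, hc'len⟩ := compress σ hσchain (prefixList_ne_nil _ _)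
  set z := ρ M with hz
  have hc'h' : c'.head? = some z := by rw [hc'h, hσdef, prefixList_head?]; simp [hz]
  have hc'l' : c'.getLast? = some z := by
    rw [hc'l, hσdef, prefixList_getLast?, show M + (M' - M) = M' by omega, hM'2]
  have hc'mem : ∀ x, x ∈ c' ↔ x ∈ InfVisit ρ := by
    intro x
    constructor
    · intro hx
      exact hσmemInf x (mem_toFinset.1 (hc'f ▸ mem_toFinset.2 hx))
    · intro hx
      exact mem_toFinset.1 (hc'f.symm ▸ mem_toFinset.2 (hσcov x hx))
  have hc'len' : c'.length ≤ n ^ 2 := by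
    refine hc'len.trans (Nat.pow_le_pow_left ?_ 2)
    exact (Finset.card_le_card (Finset.subset_univ _)).trans_eq Finset.card_univ
  -- compress the prefix
  obtain ⟨g, hgchain, hgh, hgl, hgf, hglen, hgd, hge⟩ :=
    compress3Aux (prefixList ρ M).length (prefixList ρ M) le_rfl
      (prefixList_chain' (fun i => hρ i)) (prefixList_ne_nil _ _)
  have hgh' : g.head? = some (ρ 0) := by rw [hgh, prefixList_head?]
  have hgl' : g.getLast? = some z := by rw [hgl, prefixList_getLast?]
  have hgne : g ≠ [] := by
    intro h
    rw [h] at hgh'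
    simp at hgh'
  have hgf' : g.toFinset = S M := hgf
  have hglen' : g.length ≤ n ^ 3 := by
    refine hglen.trans (Nat.pow_le_pow_left ?_ 3)
    exact (Finset.card_le_card (Finset.subset_univ _)).trans_eq Finset.card_univ
  set h := g.dropLast with hhdef
  have hgsplit : g = h ++ [z] := by
    have := dropLast_append_getLast hgne
    rw [getLast?_eq_getLast hgne] at hgl'
    rw [Option.some_inj.1 hgl'] at this
    exact this.symm
  -- build the cycle list c
  have hcbundle : ∃ c : List V, c ≠ [] ∧ c.head? = some z ∧ Chain' E c ∧
      (∀ x ∈ c.getLast?, E x z) ∧ c.toFinset = c'.toFinset ∧ c.length ≤ c'.length := by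
    have hc'ne : c' ≠ [] := by
      intro hnil
      rw [hnil] at hc'h'
      simp at hc'h'
    rcases Nat.lt_or_ge c'.length 2 with hlt | hge
    · have hlen1 : c'.length = 1 := by
        have := length_pos_iff.2 hc'ne
        omega
      have hc'eq : c' = [z] := by
        obtain ⟨a, ha⟩ := length_eq_one_iff.1 hlen1
        rw [ha] at hc'h' ⊢
        simp only [head?_cons, Option.some_inj] at hc'h'
        rw [hc'h']
      have hEzz : E z z := by
        have h1 : ρ (M + 1) ∈ σ := mem_prefixList.2 ⟨1, by omega, rfl⟩
        have h2 : ρ (M + 1) ∈ c' := mem_toFinset.1 (hc'f.symm ▸ mem_toFinset.2 h1)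
        rw [hc'eq] at h2
        simp only [mem_singleton] at h2
        have h3 := hρ M
        rw [h2] at h3
        exact h3
      refine ⟨[z], cons_ne_nil z [], rfl, isChain_singleton z, ?_, by rw [hc'eq], by rw [hc'eq]⟩
      intro x hx
      simp only [getLast?_singleton, Option.mem_some_iff] at hx
      rw [← hx]
      exact hEzz
    · have hcdne : c'.dropLast ≠ [] := by
        rw [← length_pos_iff, length_dropLast]
        omega
      have hc'last : c'.getLast hc'ne = z := by
        rw [getLast?_eq_getLast hc'ne] at hc'l'
        exact Option.some_inj.1 hc'l'
      have hsplit : c' = c'.dropLast ++ [z] := by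
        conv_lhs => rw [← dropLast_append_getLast hc'ne]
        rw [hc'last]
      have hchain2 : Chain' E (c'.dropLast) := (isChain_append.1 (hsplit ▸ hc'chain)).1
      have hwrap : ∀ x ∈ (c'.dropLast).getLast?, E x z := by
        intro x hx
        exact (isChain_append.1 (hsplit ▸ hc'chain)).2.2 x hx z rfl
      have hch2 : (c'.dropLast).head? = some z := by
        rw [← hc'h']
        conv_rhs => rw [hsplit]
        rw [head?_append_left hcdne]
      have hzc : z ∈ c'.dropLast := mem_of_mem_head? (hch2 ▸ rfl)
      have hcf2 : (c'.dropLast).toFinset = c'.toFinset := by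
        conv_rhs => rw [hsplit]
        rw [toFinset_append]
        symm
        apply Finset.union_eq_left.2
        simp only [toFinset_cons, toFinset_nil, insert_empty_eq]
        exact Finset.singleton_subset_iff.2 (mem_toFinset.2 hzc)
      exact ⟨c'.dropLast, hcdne, hch2, hchain2, hwrap, hcf2, by rw [length_dropLast]; omega⟩
  obtain ⟨c, hcne, hch, hcchain, hcwrap, hcf, hclen⟩ := hcbundle
  have hcmem : ∀ x, x ∈ c ↔ x ∈ InfVisit ρ := by
    intro x
    rw [← hc'mem x, ← mem_toFinset, hcf, mem_toFinset]
  have hL1 : 0 < c.length := length_pos_iff.2 hcne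
  have hgH : g.length = h.length + 1 := by rw [hgsplit]; simp
  set lp := lassoPlay (ρ 0) h c with hlpdef
  -- value lemmas
  have hval1 : ∀ k, k < h.length → lp k = h.getD k (ρ 0) := by
    intro k hk
    rw [hlpdef]
    unfold lassoPlay
    rw [if_pos hk]
  have hval2 : ∀ k, h.length ≤ k → lp k = c.getD ((k - h.length) % c.length) (ρ 0) := by
    intro k hk
    rw [hlpdef]
    unfold lassoPlay
    rw [if_neg (by omega)]
  have hgetDmem : ∀ (l : List V) (i : ℕ), i < l.length → l.getD i (ρ 0) ∈ l := by
    intro l i hi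
    rw [getD_eq_getElem _ _ hi]
    exact getElem_mem _
  have hchain_getD : ∀ (l : List V), Chain' E l → ∀ i, i + 1 < l.length →
      E (l.getD i (ρ 0)) (l.getD (i + 1) (ρ 0)) := by
    intro l hl i hi
    rw [getD_eq_getElem _ _ (by omega), getD_eq_getElem _ _ hi]
    have := isChain_iff_getElem.1 hl i (by omega)
    simpa [List.get_eq_getElem] using this
  have hc0 : c.getD 0 (ρ 0) = z := by
    have h1 := hch
    rw [head?_eq_head hcne, List.head_eq_getElem] at h1
    rw [getD_eq_getElem _ _ hL1]
    exact Option.some_inj.1 h1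
  have hlpH : lp h.length = z := by
    rw [hval2 h.length le_rfl, show (h.length - h.length) % c.length = 0 by simp, hc0]
  have hlp0 : lp 0 = ρ 0 := by
    rcases Nat.eq_zero_or_pos h.length with h0 | hpos
    · have hzρ0 : z = ρ 0 := by
        have hgz : g = [z] := by rw [hgsplit, length_eq_zero_iff.1 h0]; rfl
        rw [hgz] at hgh'
        exact Option.some_inj.1 (show some z = some (ρ 0) from hgh')
      calc lp 0 = lp h.length := (congrArg lp h0).symm
        _ = z := hlpH
        _ = ρ 0 := hzρ0
    · rw [hval1 0 hpos]
      have hhne : h ≠ [] := by rw [← length_pos_iff]; exact hpos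
      have h1 : h.head? = some (ρ 0) := by
        rw [← head?_append_left (t := [z]) hhne, ← hgsplit]
        exact hgh'
      rw [head?_eq_head hhne, List.head_eq_getElem] at h1
      rw [getD_eq_getElem _ _ hpos]
      exact Option.some_inj.1 h1
  -- IsPlay
  have hchainh : Chain' E h := (isChain_append.1 (hgsplit ▸ hgchain)).1
  have hjunh : ∀ x ∈ h.getLast?, E x z := by
    intro x hx
    exact (isChain_append.1 (hgsplit ▸ hgchain)).2.2 x hx z rfl
  have hlastc : c.getD (c.length - 1) (ρ 0) = c.getLast hcne := by
    rw [getD_eq_getElem _ _ (by omega), List.getLast_eq_getElem]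
  have hisplay : IsPlay E lp := by
    intro k
    rcases Nat.lt_or_ge (k + 1) h.length with hk1 | hk1
    · rw [hval1 k (by omega), hval1 (k + 1) hk1]
      exact hchain_getD h hchainh k hk1
    · rcases Nat.lt_or_ge k h.length with hk | hk
      · have hhne : h ≠ [] := by rw [← length_pos_iff]; omega
        rw [hval1 k hk, hval2 (k + 1) (by omega),
          show (k + 1 - h.length) % c.length = 0 by
            rw [show k + 1 = h.length by omega]; simp, hc0]
        have heq : h.getD k (ρ 0) = h.getLast hhne := by
          rw [List.getLast_eq_getElem, ← getD_eq_getElem _ (ρ 0) (show h.length - 1 < h.length by omega)]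
          congr 1
          omega
        rw [heq]
        exact hjunh _ (by rw [getLast?_eq_getLast hhne]; rfl)
      · have hnext : (k + 1 - h.length) % c.length = ((k - h.length) % c.length + 1) % c.length := by
          rw [show k + 1 - h.length = (k - h.length) + 1 by omega, ← Nat.mod_add_mod]
        rw [hval2 k hk, hval2 (k + 1) (by omega), hnext]
        have hiL : (k - h.length) % c.length < c.length := Nat.mod_lt _ hL1
        rcases Nat.lt_or_ge ((k - h.length) % c.length + 1) c.length with hlt | hge2
        · rw [Nat.mod_eq_of_lt hlt]
          exact hchain_getD c hcchain _ hlt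
        · have hieq : (k - h.length) % c.length + 1 = c.length := by omega
          rw [hieq, Nat.mod_self, hc0]
          have heq : c.getD ((k - h.length) % c.length) (ρ 0) = c.getLast hcne := by
            rw [← hlastc]
            congr 1
            omega
          rw [heq]
          exact hcwrap _ (by rw [getLast?_eq_getLast hcne]; rfl)
  -- prefix lemmas for lp
  have hple : ∀ m, m + 1 ≤ h.length → prefixList lp m = g.take (m + 1) := by
    intro m hm
    apply List.ext_getElem
    · rw [prefixList_length, length_take, hgH]
      omega
    · intro i h1 h2
      rw [prefixList_getElem, getElem_take]
      rw [prefixList_length] at h1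
      rw [hval1 i (by omega), getD_eq_getElem _ _ (show i < h.length by omega)]
      simp only [hgsplit]
      rw [getElem_append_left (by omega)]
  have hpH : prefixList lp h.length = g := by
    apply List.ext_getElem
    · rw [prefixList_length, hgH]
    · intro i h1 h2
      rw [prefixList_getElem]
      rw [prefixList_length] at h1
      rcases Nat.lt_or_ge i h.length with hi | hi
      · rw [hval1 i hi, getD_eq_getElem _ _ hi]
        simp only [hgsplit]
        rw [getElem_append_left hi]
      · have hiH : i = h.length := by rw [hgH] at h2; omega
        rw [hval2 i hi, show (i - h.length) % c.length = 0 by rw [hiH]; simp, hc0]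
        simp only [hgsplit]
        rw [getElem_concat_length (by omega)]
  have hlpS : ∀ k, lp k ∈ S M1 := by
    intro k
    rcases Nat.lt_or_ge k h.length with hk | hk
    · have h1 : lp k ∈ h := by
        rw [hval1 k hk]
        exact hgetDmem h k hk
      have h2 : lp k ∈ g := by rw [hgsplit]; exact mem_append_left _ h1
      exact (hSM M le_rfl) ▸ (hgf' ▸ mem_toFinset.2 h2)
    · have h1 : lp k ∈ c := by
        rw [hval2 k hk]
        exact hgetDmem c _ (Nat.mod_lt _ hL1)
      exact hInfS _ ((hcmem _).1 h1)
  have hpfin : ∀ m, h.length ≤ m → (prefixList lp m).toFinset = S M1 := by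
    intro m hm
    apply Finset.Subset.antisymm
    · intro x hx
      obtain ⟨i, _, hix⟩ := mem_prefixList.1 (mem_toFinset.1 hx)
      exact hix ▸ hlpS i
    · intro x hx
      have hxg : x ∈ g := mem_toFinset.1 (hgf' ▸ (hSM M le_rfl).symm ▸ hx)
      rw [hgsplit] at hxg
      rcases mem_append.1 hxg with hxh | hxz
      · obtain ⟨i, hi, hix⟩ := mem_iff_getElem.1 hxh
        refine mem_toFinset.2 (mem_prefixList.2 ⟨i, by omega, ?_⟩)
        rw [hval1 i hi, getD_eq_getElem _ _ hi]
        exact hix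
      · simp only [mem_singleton] at hxz
        refine mem_toFinset.2 (mem_prefixList.2 ⟨h.length, by omega, ?_⟩)
        rw [hlpH, hxz]
  -- conclusion
  refine ⟨h, c, hcne, ?_, ?_, hisplay, ?_, ?_, ?_⟩
  · have : g.length = h.length + 1 := hgH
    omega
  · exact hclen.trans hc'len'
  · -- InfVisit equality
    rw [← hlpdef]
    apply Set.ext
    intro v
    constructor
    · intro hv
      obtain ⟨k, hk1, hk2⟩ := hv h.length
      have h1 : lp k ∈ c := by
        rw [hval2 k hk1]
        exact hgetDmem c _ (Nat.mod_lt _ hL1)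
      exact (hcmem v).1 (hk2 ▸ h1)
    · intro hv
      have hvc : v ∈ c := (hcmem v).2 hv
      obtain ⟨i, hi, hvi⟩ := mem_iff_getElem.1 hvc
      intro N
      have hNL : N ≤ N * c.length := Nat.le_mul_of_pos_right N hL1
      refine ⟨h.length + i + N * c.length, by omega, ?_⟩
      rw [hval2 (h.length + i + N * c.length) (by omega),
        show h.length + i + N * c.length - h.length = i + N * c.length by omega,
        Nat.add_mul_mod_self_right, Nat.mod_eq_of_lt hi, getD_eq_getElem _ _ hi]
      exact hvi
  · -- every lasso prefix has a matching prefix of ρ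
    rw [← hlpdef]
    intro m
    rcases Nat.lt_or_ge m h.length with hm | hm
    · obtain ⟨j, hj0, hjle, hjf, hjl⟩ := hgd (m + 1) (by omega) (by omega)
      rw [prefixList_length] at hjle
      have h1 : prefixList lp m = g.take (m + 1) := hple m (by omega)
      have h2 : prefixList ρ (j - 1) = (prefixList ρ M).take j := by
        conv_rhs => rw [show j = (j - 1) + 1 by omega]
        rw [prefixList_take ρ (show j - 1 ≤ M by omega)]
      refine ⟨j - 1, ?_, ?_, ?_⟩
      · rw [prefixList_head?, prefixList_head?, hlp0]
      · rw [h1, h2]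
        exact hjl.symm
      · apply setOf_mem_eq
        rw [h1, h2]
        exact hjf.symm
    · have hu : lp m ∈ c := by
        rw [hval2 m hm]
        exact hgetDmem c _ (Nat.mod_lt _ hL1)
      have huInf : lp m ∈ InfVisit ρ := (hcmem _).1 hu
      obtain ⟨k, hk1, hk2⟩ := huInf (M + 1)
      refine ⟨k, ?_, ?_, ?_⟩
      · rw [prefixList_head?, prefixList_head?, hlp0]
      · rw [prefixList_getLast?, prefixList_getLast?, hk2]
      · apply setOf_mem_eq
        rw [hpfin m hm]
        exact (hSM k (by omega)).symm
  · -- every prefix of ρ has a matching lasso prefix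
    rw [← hlpdef]
    intro m'
    rcases le_or_gt m' M with hm' | hm'
    · obtain ⟨k, hk0, hkle, hkf2, hkl2⟩ := hge (m' + 1) (by omega) (by rw [prefixList_length]; omega)
      have h2 : prefixList ρ m' = (prefixList ρ M).take (m' + 1) := (prefixList_take ρ hm').symm
      rcases Nat.lt_or_ge k (h.length + 1) with hkH | hkH
      · have h1 : prefixList lp (k - 1) = g.take k := by
          have h3 := hple (k - 1) (by omega)
          rw [show k - 1 + 1 = k by omega] at h3
          exact h3
        refine ⟨k - 1, ?_, ?_, ?_⟩
        · rw [prefixList_head?, prefixList_head?, hlp0]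
        · rw [h2, h1]
          exact hkl2
        · apply setOf_mem_eq
          rw [h2, h1]
          exact hkf2
      · have hkeq : k = h.length + 1 := by
          have h3 : k ≤ g.length := hkle
          rw [hgH] at h3
          omega
        have h1 : g.take k = g := by rw [hkeq, ← hgH, take_length]
        refine ⟨h.length, ?_, ?_, ?_⟩
        · rw [prefixList_head?, prefixList_head?, hlp0]
        · rw [h2, hpH, ← h1]
          exact hkl2
        · apply setOf_mem_eq
          rw [h2, hpH, ← h1]
          exact hkf2
    · have huInf : ρ m' ∈ InfVisit ρ := htail m' (by omega)
      have hvc : ρ m' ∈ c := (hcmem _).2 huInf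
      obtain ⟨i, hi, hvi⟩ := mem_iff_getElem.1 hvc
      refine ⟨h.length + i, ?_, ?_, ?_⟩
      · rw [prefixList_head?, prefixList_head?, hlp0]
      · rw [prefixList_getLast?, prefixList_getLast?,
          hval2 (h.length + i) (by omega), show h.length + i - h.length = i by omega,
          Nat.mod_eq_of_lt hi, getD_eq_getElem _ _ hi, hvi]
      · apply setOf_mem_eq
        rw [hpfin (h.length + i) (by omega)]
        exact hSM m' (by omega)
end

section
/- For a parity game on a finite graph, a requirement λ : V → {0,1} is satisfiable (i.e., from every vertex v there exists a λ-consistent play) if and only if for every vertex v there exist a cycle-free finite path h_v from v and a set W_v ⊆ V with last(h_v) ∈ W_v such that: (1) the induced subgraph on W_v is strongly connected, and (2) for every vertex u in Occ(h_v) ∪ W_v with λ(u) = 1, if player i controls u, then min κ_i(W_v) is even. -/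
section StmtAux

open List Relation

variable {V : Type*}

lemma stmt17_infVisit_shift (ρ : ℕ → V) (k : ℕ) :
    InfVisit (fun i => ρ (k + i)) = InfVisit ρ := by
  ext v
  constructor
  · intro h N
    obtain ⟨j, hj, he⟩ := h N
    exact ⟨k + j, le_trans hj (Nat.le_add_left _ _), he⟩
  · intro h N
    obtain ⟨j, hj, he⟩ := h (k + N)
    refine ⟨j - k, by omega, ?_⟩
    simpa [Nat.add_sub_cancel' (show k ≤ j by omega)] using he

lemma stmt17_eventually_mem [Finite V] (ρ : ℕ → V) :
    ∃ N : ℕ, ∀ k, N ≤ k → ρ k ∈ InfVisit ρ := by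
  classical
  have hfin : ({k : ℕ | ρ k ∉ InfVisit ρ}).Finite := by
    have hsub : {k : ℕ | ρ k ∉ InfVisit ρ} ⊆
        ⋃ v ∈ {v : V | v ∉ InfVisit ρ}, {k : ℕ | ρ k = v} := by
      intro k hk
      exact Set.mem_biUnion hk rfl
    refine Set.Finite.subset ?_ hsub
    refine Set.Finite.biUnion (Set.toFinite _) ?_
    intro v hv
    simp only [Set.mem_setOf_eq, InfVisit, not_forall] at hv
    obtain ⟨M, hM⟩ := hv
    push_neg at hM
    refine Set.Finite.subset (Set.finite_Iio M) ?_
    intro k hk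
    simp only [Set.mem_setOf_eq] at hk
    by_contra hlt
    exact hM k (by simpa using hlt) hk
  obtain ⟨N, hN⟩ := hfin.bddAbove
  refine ⟨N + 1, fun k hk => ?_⟩
  by_contra hmem
  have := hN hmem
  omega

lemma stmt17_dedup_path {E : V → V → Prop} :
    ∀ l : List V, l ≠ [] → l.Chain' E →
      ∃ l' : List V, l' ≠ [] ∧ l'.Chain' E ∧ l'.Nodup ∧ l'.head? = l.head? ∧
        l'.getLast? = l.getLast? ∧ ∀ x ∈ l', x ∈ l := by
  intro l
  induction l with
  | nil => intro h; exact absurd rfl h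
  | cons a t ih =>
    intro _ hc
    rcases t with _ | ⟨b, t⟩
    · exact ⟨[a], by simp, List.isChain_singleton a, by simp, rfl, rfl, by simp⟩
    · rw [List.Chain', isChain_cons_cons] at hc
      obtain ⟨l', hne, hch, hnd, hhd, hlast, hsub⟩ := ih (by simp) hc.2
      by_cases ha : a ∈ l'
      · obtain ⟨s, t', rfl⟩ := List.append_of_mem ha
        refine ⟨a :: t', by simp, ?_, ?_, by simp, ?_, ?_⟩
        · exact hch.suffix ⟨s, rfl⟩
        · exact hnd.sublist ((List.sublist_append_right s (a :: t')))
        · calc (a :: t').getLast? = (s ++ a :: t').getLast? := (List.getLast?_append_cons s a t').symm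
            _ = (b :: t).getLast? := hlast
            _ = (a :: b :: t).getLast? := (List.getLast?_cons_cons).symm
        · intro x hx
          rcases List.mem_cons.1 hx with rfl | hx
          · simp
          · have : x ∈ s ++ a :: t' := by simp [hx]
            exact List.mem_cons_of_mem _ (hsub x this)
      · refine ⟨a :: l', by simp, ?_, by simp [hnd, ha], by simp, ?_, ?_⟩
        · rw [List.Chain', isChain_cons]
          refine ⟨fun y hy => ?_, hch⟩
          rw [hhd] at hy
          simp only [head?_cons, Option.mem_def, Option.some.injEq] at hy
          subst hy; exact hc.1
        · rcases l' with _ | ⟨c, l''⟩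
          · exact absurd rfl hne
          · simpa only [List.getLast?_cons_cons] using hlast
        · intro x hx
          rcases List.mem_cons.1 hx with rfl | hx
          · simp
          · exact List.mem_cons_of_mem _ (hsub x hx)

lemma stmt17_getLast?_cons_ne {a : V} {l : List V} (h : l ≠ []) :
    (a :: l).getLast? = l.getLast? := by
  cases l with
  | nil => exact absurd rfl h
  | cons x t => exact List.getLast?_cons_cons

lemma stmt17_chain_append_chain {R : V → V → Prop} :
    ∀ (l : List V) (a : V), List.Chain R a l → ∀ (m : List V) (b : V),
      (a :: l).getLast? = some b → List.Chain R b m → List.Chain R a (l ++ m) := by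
  intro l
  induction l with
  | nil =>
    intro a _ m b hb hm
    simp only [getLast?_singleton, Option.some.injEq] at hb
    subst hb; simpa using hm
  | cons c l' ih =>
    intro a hc m b hb hm
    rw [List.Chain, isChain_cons_cons] at hc
    have hb' : (c :: l').getLast? = some b := by
      rw [← hb]; exact List.getLast?_cons_cons.symm
    exact List.Chain.cons hc.1 (ih c hc.2 m b hb' hm)

lemma stmt17_transGen_path {R : V → V → Prop} {u w : V} (h : TransGen R u w) :
    ∃ l : List V, l ≠ [] ∧ List.Chain R u l ∧ l.getLast? = some w := by
  induction h with
  | single hr => exact ⟨[_], by simp, List.Chain.cons hr List.Chain.nil, rfl⟩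
  | @tail b c hab hbc ih =>
    obtain ⟨l, hne, hch, hlast⟩ := ih
    refine ⟨l ++ [c], by simp, ?_, ?_⟩
    · refine stmt17_chain_append_chain l u hch [c] b ?_ (List.Chain.cons hbc List.Chain.nil)
      rw [stmt17_getLast?_cons_ne hne]
      exact hlast
    · rw [List.getLast?_append_of_ne_nil _ (by simp)]; rfl

lemma stmt17_chain_mem {E : V → V → Prop} {W : Finset V} [DecidableEq V] :
    ∀ (c : List V) (a : V),
      List.Chain (fun x y => E x y ∧ x ∈ W ∧ y ∈ W) a c → ∀ x ∈ c, x ∈ W := by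
  intro c
  induction c with
  | nil => intro a _ x hx; simp at hx
  | cons b c' ih =>
    intro a hc x hx
    rw [List.Chain, isChain_cons_cons] at hc
    rcases List.mem_cons.1 hx with rfl | hx
    · exact hc.1.2.2
    · exact ih b hc.2 x hx

lemma stmt17_cycle_through {E : V → V → Prop} {W : Finset V} [DecidableEq V]
    (hconn : ∀ u ∈ W, ∀ w ∈ W,
      Relation.TransGen (fun a b => E a b ∧ a ∈ W ∧ b ∈ W) u w)
    (a : V) (ha : a ∈ W) :
    ∀ s : List V, (∀ x ∈ s, x ∈ W) →
      ∃ c : List V, c ≠ [] ∧ List.Chain (fun x y => E x y ∧ x ∈ W ∧ y ∈ W) a c ∧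
        c.getLast? = some a ∧ ∀ x ∈ s, x ∈ c := by
  intro s
  induction s with
  | nil =>
    intro _
    obtain ⟨c, hne, hch, hlast⟩ := stmt17_transGen_path (hconn a ha a ha)
    exact ⟨c, hne, hch, hlast, by simp⟩
  | cons x s' ih =>
    intro hs
    have hx : x ∈ W := hs x (by simp)
    obtain ⟨c, hne, hch, hlast, hall⟩ := ih (fun y hy => hs y (by simp [hy]))
    obtain ⟨p1, hp1ne, hp1ch, hp1last⟩ := stmt17_transGen_path (hconn a ha x hx)
    obtain ⟨p2, hp2ne, hp2ch, hp2last⟩ := stmt17_transGen_path (hconn x hx a ha)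
    have hch12 : List.Chain (fun u v => E u v ∧ u ∈ W ∧ v ∈ W) a (p1 ++ p2) := by
      refine stmt17_chain_append_chain p1 a hp1ch p2 x ?_ hp2ch
      rw [stmt17_getLast?_cons_ne hp1ne]; exact hp1last
    have h12last : (p1 ++ p2).getLast? = some a := by
      rw [List.getLast?_append_of_ne_nil _ hp2ne]; exact hp2last
    refine ⟨p1 ++ p2 ++ c, by simp [hne], ?_, ?_, ?_⟩
    · refine stmt17_chain_append_chain (p1 ++ p2) a hch12 c a ?_ hch
      rw [stmt17_getLast?_cons_ne (by simp [hp1ne])]; exact h12last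
    · rw [List.getLast?_append_of_ne_nil _ hne]; exact hlast
    · intro y hy
      rcases List.mem_cons.1 hy with rfl | hy
      · have : ∃ hh, y = p1.getLast hh := List.mem_getLast?_eq_getLast hp1last
        obtain ⟨hh, rfl⟩ := this
        exact List.mem_append.2 (Or.inl (List.mem_append.2 (Or.inl (List.getLast_mem hh))))
      · exact List.mem_append.2 (Or.inr (hall y hy))

end StmtAux

theorem stmt_17 {V P : Type*} [Fintype V] (E : V → V → Prop) (hE : ∀ v, ∃ w, E v w)
    (control : V → P) (κ : P → V → ℕ) (lam : V → Bool) :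
    -- `lam` is satisfiable: from every vertex there is a `lam`-consistent play
    (∀ v : V, ∃ ρ : ℕ → V, IsPlay E ρ ∧ ρ 0 = v ∧
        ∀ k, lam (ρ k) = true →
          Even (sInf (κ (control (ρ k)) '' InfVisit (fun i => ρ (k + i))))) ↔
    -- the certificate condition
    (∀ v : V, ∃ (h : List V) (W : Finset V), h ≠ [] ∧ h.head? = some v ∧
        List.Chain' E h ∧ h.Nodup ∧ h.getLastD v ∈ W ∧
        (∀ u ∈ W, ∀ w ∈ W,
          Relation.TransGen (fun a b => E a b ∧ a ∈ W ∧ b ∈ W) u w) ∧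
        (∀ u : V, (u ∈ h ∨ u ∈ W) → lam u = true →
          Even (sInf (κ (control u) '' (W : Set V))))) := by
  classical
  constructor
  · -- forward direction
    intro hsat v
    obtain ⟨ρ, hplay, hρ0, hcons⟩ := hsat v
    obtain ⟨N, hN⟩ := stmt17_eventually_mem ρ
    set W : Finset V := (Set.toFinite (InfVisit ρ)).toFinset with hWdef
    have hWmem : ∀ x, x ∈ W ↔ x ∈ InfVisit ρ := fun x => Set.Finite.mem_toFinset _
    have hWcoe : (W : Set V) = InfVisit ρ := Set.Finite.coe_toFinset _
    -- the finite prefix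
    set l : List V := (List.range (N + 1)).map ρ with hldef
    have hlne : l ≠ [] := by simp [hldef]
    have hlhead : l.head? = some v := by
      rw [hldef, List.range_succ_eq_map]
      simp [hρ0]
    have hllast : l.getLast? = some (ρ N) := by
      rw [hldef, List.range_succ, List.map_append,
        List.getLast?_append_of_ne_nil _ (by simp)]
      rfl
    have hlchain : l.Chain' E := by
      rw [List.Chain', List.isChain_iff_getElem]
      intro i hi
      change E (l.get ⟨i, by omega⟩) (l.get ⟨i+1, hi⟩)
      simp only [hldef, List.length_map, List.length_range] at hi
      have h1 : i < ((List.range (N+1)).map ρ).length := by simp; omega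
      have h2 : i + 1 < ((List.range (N+1)).map ρ).length := by simp; omega
      rw [show (List.map ρ (List.range (N+1))).get ⟨i, by omega⟩
            = ρ i by simp]
      rw [show (List.map ρ (List.range (N+1))).get ⟨i+1, by omega⟩
            = ρ (i+1) by simp]
      exact hplay i
    have hlmem : ∀ x ∈ l, ∃ k ≤ N, ρ k = x := by
      intro x hx
      simp only [hldef, List.mem_map, List.mem_range] at hx
      obtain ⟨k, hk, rfl⟩ := hx
      exact ⟨k, by omega, rfl⟩
    obtain ⟨h, hne, hch, hnd, hhd, hlast, hsub⟩ := stmt17_dedup_path l hlne hlchain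
    refine ⟨h, W, hne, by rw [hhd, hlhead], hch, hnd, ?_, ?_, ?_⟩
    · -- last of h in W
      rw [List.getLastD_eq_getLast?, hlast, hllast]
      exact (hWmem _).2 (hN N le_rfl)
    · -- strong connectivity
      have key : ∀ d k, N ≤ k →
          Relation.TransGen (fun a b => E a b ∧ a ∈ W ∧ b ∈ W) (ρ k) (ρ (k + 1 + d)) := by
        intro d
        induction d with
        | zero =>
          intro k hk
          refine Relation.TransGen.single ⟨hplay k, ?_, ?_⟩
          · exact (hWmem _).2 (hN k hk)
          · exact (hWmem _).2 (hN (k+1) (by omega))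
        | succ d ihd =>
          intro k hk
          refine Relation.TransGen.tail (ihd k hk) ⟨?_, ?_, ?_⟩
          · exact hplay (k + 1 + d)
          · exact (hWmem _).2 (hN (k+1+d) (by omega))
          · exact (hWmem _).2 (hN (k+1+d+1) (by omega))
      intro u hu w hw
      obtain ⟨k, hk, hku⟩ := (hWmem u).1 hu N
      obtain ⟨j, hj, hjw⟩ := (hWmem w).1 hw (k + 1)
      have := key (j - k - 1) k hk
      rw [show k + 1 + (j - k - 1) = j by omega, hku, hjw] at this
      exact this
    · -- parity certificate
      intro u humem hlam
      have : ∃ k, ρ k = u := by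
        rcases humem with hu | hu
        · obtain ⟨k, _, hk⟩ := hlmem u (hsub u hu)
          exact ⟨k, hk⟩
        · obtain ⟨k, _, hk⟩ := (hWmem u).1 hu 0
          exact ⟨k, hk⟩
      obtain ⟨k, rfl⟩ := this
      have := hcons k hlam
      rwa [stmt17_infVisit_shift, ← hWcoe] at this
  · -- backward direction
    intro hcert v
    obtain ⟨h, W, hne, hhead, hchain, _, hlastW, hconn, hpar⟩ := hcert v
    obtain ⟨c, hcne, hcch, hclast, hcall⟩ :=
      stmt17_cycle_through hconn (h.getLastD v) hlastW W.toList (fun x hx => by simpa using hx)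
    set n := h.length with hndef
    set m := c.length with hmdef
    have hn : 0 < n := List.length_pos_iff.2 hne
    have hm : 0 < m := List.length_pos_iff.2 hcne
    set ρ : ℕ → V := fun k => if k < n then h.getD k v else c.getD ((k - n) % m) v with hρdef
    have cmem : ∀ x ∈ c, x ∈ W := stmt17_chain_mem c _ hcch
    have hWc : ∀ x ∈ W, x ∈ c := fun x hx => hcall x (by simpa using hx)
    -- e = getLast of h = getLast of c
    have hhe : h.getLast hne = h.getLastD v := by
      rw [List.getLastD_eq_getLast?, List.getLast?_eq_getLast_of_ne_nil hne]; rfl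
    have hce : c.getLast hcne = h.getLastD v := by
      have := hclast
      rw [List.getLast?_eq_getLast_of_ne_nil hcne] at this
      exact Option.some.inj this
    -- basic edge facts
    have hc0 : E (h.getLastD v) (c.get ⟨0, hm⟩) := (List.isChain_iff_getElem.1 hcch 0 (by simpa using hm)).1
    have hcstep : ∀ i (hi : i < m - 1),
        E (c.get ⟨i, by omega⟩) (c.get ⟨i + 1, by omega⟩) :=
      fun i hi => (List.isChain_iff_getElem.1 hcch (i+1) (by simp; omega)).1
    have hρlt : ∀ k (hk : k < n), ρ k = h.get ⟨k, hk⟩ := by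
      intro k hk
      simp only [hρdef, if_pos hk]
      exact List.getD_eq_getElem _ _ hk
    have hρge : ∀ k, n ≤ k → ρ k = c.get ⟨(k - n) % m, Nat.mod_lt _ hm⟩ := by
      intro k hk
      simp only [hρdef, if_neg (by omega : ¬ k < n)]
      exact List.getD_eq_getElem _ _ (Nat.mod_lt _ hm)
    have hplay : IsPlay E ρ := by
      intro k
      by_cases h1 : k + 1 < n
      · rw [hρlt k (by omega), hρlt (k+1) h1]
        exact List.isChain_iff_getElem.1 hchain k (by omega)
      · by_cases h2 : k < n
        · -- k + 1 = n
          have hkn : k = n - 1 := by omega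
          rw [hρlt k h2, hρge (k+1) (by omega)]
          have hidx : (k + 1 - n) % m = 0 := by
            have : k + 1 - n = 0 := by omega
            simp [this]
          have hgl : h.get ⟨k, h2⟩ = h.getLastD v := by
            rw [← hhe, List.getLast_eq_getElem, List.get_eq_getElem]
            congr 1
          have : c.get ⟨(k + 1 - n) % m, Nat.mod_lt _ hm⟩ = c.get ⟨0, hm⟩ := by
            congr 1
            exact Fin.ext hidx
          rw [this, hgl]
          exact hc0
        · -- k ≥ n
          have hk : n ≤ k := by omega
          rw [hρge k hk, hρge (k+1) (by omega)]
          have harith : (k + 1 - n) % m = ((k - n) % m + 1) % m := by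
            rw [show k + 1 - n = (k - n) + 1 by omega, ← Nat.mod_add_mod]
          set i := (k - n) % m with hidef
          have hi : i < m := Nat.mod_lt _ hm
          by_cases h3 : i + 1 < m
          · have : (k + 1 - n) % m = i + 1 := by
              rw [harith, Nat.mod_eq_of_lt h3]
            have heq : c.get ⟨(k + 1 - n) % m, Nat.mod_lt _ hm⟩
                = c.get ⟨i + 1, h3⟩ := by
              congr 1; exact Fin.ext this
            rw [heq]
            exact hcstep i (by omega)
          · -- i = m - 1, wrap around
            have him : i + 1 = m := by omega
            have hz : (k + 1 - n) % m = 0 := by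
              rw [harith, him, Nat.mod_self]
            have heq : c.get ⟨(k + 1 - n) % m, Nat.mod_lt _ hm⟩ = c.get ⟨0, hm⟩ := by
              congr 1; exact Fin.ext hz
            have hlasti : c.get ⟨i, hi⟩ = h.getLastD v := by
              rw [← hce, List.getLast_eq_getElem, List.get_eq_getElem]
              congr 1
              exact (show i = c.length - 1 by omega)
            rw [heq, hlasti]
            exact hc0
    have hInf : InfVisit ρ = (W : Set V) := by
      ext x
      constructor
      · intro hx
        obtain ⟨k, hk, hkx⟩ := hx n
        rw [hρge k hk] at hkx
        exact Finset.mem_coe.2 (cmem _ (hkx ▸ List.get_mem _ _))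
      · intro hx
        obtain ⟨i, hix⟩ := List.mem_iff_get.1 (hWc x (Finset.mem_coe.1 hx))
        intro M
        refine ⟨n + i.1 + m * M, by nlinarith [i.2, hm], ?_⟩
        rw [hρge _ (by omega)]
        have : (n + i.1 + m * M - n) % m = i.1 := by
          rw [show n + i.1 + m * M - n = i.1 + m * M by omega]
          rw [Nat.add_mul_mod_self_left]
          exact Nat.mod_eq_of_lt i.2
        have h2 : (⟨(n + i.1 + m * M - n) % m, Nat.mod_lt _ hm⟩ : Fin c.length) = i :=
          Fin.ext (by simpa using this)
        exact (congrArg c.get h2).trans hix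
    refine ⟨ρ, hplay, ?_, ?_⟩
    · rw [hρlt 0 hn, List.get_mk_zero]
      have := List.head?_eq_head (l := h) hne
      rw [hhead] at this
      exact (Option.some.inj this).symm
    · intro k hlam
      have hmem : ρ k ∈ h ∨ ρ k ∈ W := by
        by_cases hk : k < n
        · left; rw [hρlt k hk]; exact List.get_mem _ _
        · right; rw [hρge k (by omega)]; exact cmem _ (List.get_mem _ _)
      have := hpar (ρ k) hmem hlam
      rwa [stmt17_infVisit_shift, hInf]
end
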